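/- The ring ℤ/8ℤ[X]/(X², 2X) is not a TAF-ring: the ideal generated by the image x of X and the square of the maximal ideal (2, x) are incomparable under inclusion. -/

import Mathlib

/-- An ideal is 2-absorbing if whenever a product of three elements lies in it,
the product of some two of them lies in it. -/
def IsTwoAbsorbing {R : Type*} [CommRing R] (I : Ideal R) : Prop :=
  ∀ a b c : R, a * b * c ∈ I → a * b ∈ I ∨ a * c ∈ I ∨ b * c ∈ I

/-- A TAF-ring: every proper ideal is a finite product of proper 2-absorbing ideals. -/
def IsTAFRing (R : Type*) [CommRing R] : Prop :=
  ∀ I : Ideal R, I ≠ ⊤ → ∃ (n : ℕ) (J : Fin n → Ideal R),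
    (∀ i, J i ≠ ⊤ ∧ IsTwoAbsorbing (J i)) ∧ I = ∏ i, J i

noncomputable abbrev A7 : Type :=
  Polynomial (ZMod 8) ⧸
    (Ideal.span {Polynomial.X ^ 2, 2 * Polynomial.X} : Ideal (Polynomial (ZMod 8)))

noncomputable abbrev x7 : A7 := Ideal.Quotient.mk _ Polynomial.X

noncomputable abbrev M7 : Ideal A7 := Ideal.span {(2 : A7), x7}


open Polynomial

noncomputable abbrev I0 : Ideal (Polynomial (ZMod 8)) := Ideal.span {Polynomial.X ^ 2, 2 * Polynomial.X}

lemma hx2 : x7 * x7 = 0 := by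
  rw [show x7 * x7 = Ideal.Quotient.mk I0 (X^2) by rw [map_pow]; ring]
  rw [Ideal.Quotient.eq_zero_iff_mem]
  exact Ideal.subset_span (by simp)

lemma h2x : 2 * x7 = 0 := by
  rw [show (2:A7) * x7 = Ideal.Quotient.mk I0 (2*X) by rw [map_mul, map_ofNat]]
  rw [Ideal.Quotient.eq_zero_iff_mem]
  exact Ideal.subset_span (by simp)

lemma h8 : (8 : A7) = 0 := by
  have : (8 : Polynomial (ZMod 8)) = 0 := by
    rw [← map_ofNat (Polynomial.C : ZMod 8 →+* Polynomial (ZMod 8)) 8,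
      show (8 : ZMod 8) = 0 by decide, map_zero]
  rw [show (8:A7) = Ideal.Quotient.mk I0 8 by rw [map_ofNat], this, map_zero]

noncomputable def phi0 : A7 →+* ZMod 8 :=
  Ideal.Quotient.lift I0 (Polynomial.evalRingHom 0) (by
    intro p hp
    refine Submodule.span_induction ?_ ?_ ?_ ?_ hp
    · rintro q hq
      rcases hq with h | h <;> subst h <;> simp
    · simp
    · intro a b _ _ ha hb
      simp only [Polynomial.coe_evalRingHom] at ha hb ⊢; simp [ha, hb]
    · intro a b _ hb
      simp only [Polynomial.coe_evalRingHom, smul_eq_mul] at hb ⊢; simp [hb])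

lemma phi0_x : phi0 x7 = 0 := by
  simp [phi0, x7]

lemma phi0_4 : phi0 4 = 4 := by simp [map_ofNat]

lemma four_not_mem : (4 : A7) ∉ Ideal.span {x7} := by
  intro h
  rw [Ideal.mem_span_singleton'] at h
  obtain ⟨t, ht⟩ := h
  apply_fun phi0 at ht
  rw [map_mul, phi0_x, mul_zero, phi0_4] at ht
  exact absurd ht (by decide)

lemma span_x_ne_top : Ideal.span {x7} ≠ ⊤ := by
  intro h
  have : (1 : A7) ∈ Ideal.span {x7} := h ▸ Submodule.mem_top
  rw [Ideal.mem_span_singleton'] at this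
  obtain ⟨t, ht⟩ := this
  apply_fun phi0 at ht
  rw [map_mul, phi0_x, mul_zero, map_one] at ht
  exact absurd ht (by decide)

noncomputable abbrev B7 : Type := TrivSqZeroExt (ZMod 2) (ZMod 2)

noncomputable def eps : B7 := TrivSqZeroExt.inr 1

lemma two_B7 : (2 : B7) = 0 := by
  rw [← one_add_one_eq_two, ← TrivSqZeroExt.inl_one, ← TrivSqZeroExt.inl_add,
    show (1+1 : ZMod 2) = 0 by decide, TrivSqZeroExt.inl_zero]

lemma eps_sq : eps * eps = 0 := by
  simp [eps, TrivSqZeroExt.inr_mul_inr]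

noncomputable def phiB : A7 →+* B7 :=
  Ideal.Quotient.lift I0
    (Polynomial.eval₂RingHom ((algebraMap (ZMod 2) B7).comp
      (ZMod.castHom (show (2:ℕ) ∣ 8 by norm_num) (ZMod 2))) eps) (by
    intro p hp
    refine Submodule.span_induction ?_ ?_ ?_ ?_ hp
    · rintro q hq
      rcases hq with h | h <;> subst h
      · simp [pow_two, eps_sq]
      · have h2 : ((ZMod.castHom (show (2:ℕ) ∣ 8 by norm_num) (ZMod 2)) 2) = 0 := by decide
        simp [two_B7]
    · simp
    · intro a b _ _ ha hb
      simp only [Polynomial.coe_eval₂RingHom] at ha hb ⊢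
      simp [Polynomial.eval₂_add, ha, hb]
    · intro a b _ hb
      simp only [Polynomial.coe_eval₂RingHom, smul_eq_mul] at hb ⊢
      simp [Polynomial.eval₂_mul, hb])

lemma phiB_x : phiB x7 = eps := by simp [phiB, x7]
lemma phiB_2 : phiB 2 = 0 := by
  rw [show (2:A7) = Ideal.Quotient.mk I0 2 by rw [map_ofNat]]
  simp only [phiB, Ideal.Quotient.lift_mk]
  rw [map_ofNat, two_B7]

lemma x_not_mem_M2 : x7 ∉ M7 ^ 2 := by
  intro h
  have hmap : Ideal.map phiB (M7 ^ 2) ≤ ⊥ := by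
    rw [Ideal.map_pow, Ideal.map_span, Set.image_pair, phiB_x, phiB_2]
    rw [show (Ideal.span {(0:B7), eps}) = Ideal.span {eps} from Submodule.span_insert_zero,
      Ideal.span_singleton_pow,
      show eps ^ 2 = 0 from by rw [pow_two, eps_sq]]
    simp
  have hb := hmap (Ideal.mem_map_of_mem phiB h)
  rw [Ideal.mem_bot, phiB_x] at hb
  have h1 : (1 : ZMod 2) = 0 := by
    have := congrArg TrivSqZeroExt.snd hb
    simpa [eps] using this
  exact absurd h1 (by decide)

lemma unit_of_not_mem {a : A7} (ha : a ∉ M7) : IsUnit a := by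
  obtain ⟨p, rfl⟩ := Ideal.Quotient.mk_surjective a
  have hdec : Ideal.Quotient.mk I0 p
      = x7 * Ideal.Quotient.mk I0 p.divX + Ideal.Quotient.mk I0 (Polynomial.C (p.coeff 0)) := by
    conv_lhs => rw [← Polynomial.X_mul_divX_add p]
    rw [map_add, map_mul]
  set c := p.coeff 0 with hc
  have hCc : Ideal.Quotient.mk I0 (Polynomial.C c) ∉ M7 := by
    intro hmem
    apply ha
    rw [hdec]
    exact Ideal.add_mem _ (Ideal.mul_mem_right _ _ (Ideal.subset_span (by simp))) hmem
  have hcodd : ¬ ∃ d : ZMod 8, c = 2 * d := by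
    rintro ⟨d, hd⟩
    apply hCc
    rw [hd, show Polynomial.C (2 * d) = 2 * Polynomial.C d by rw [map_mul, map_ofNat], map_mul,
      map_ofNat]
    exact Ideal.mul_mem_right _ _ (Ideal.subset_span (by simp))
  have hunit : IsUnit (Ideal.Quotient.mk I0 (Polynomial.C c)) := by
    obtain ⟨e, he⟩ : ∃ e : ZMod 8, c * e = 1 := by
      revert hcodd
      exact (by decide : ∀ c : ZMod 8, (¬ ∃ d : ZMod 8, c = 2 * d) → ∃ e : ZMod 8, c * e = 1) c
    exact IsUnit.of_mul_eq_one (Ideal.Quotient.mk I0 (Polynomial.C e)) (by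
      rw [← map_mul, ← map_mul, he, map_one, map_one])
  have hnil : IsNilpotent (x7 * Ideal.Quotient.mk I0 p.divX) := by
    refine ⟨2, ?_⟩
    rw [pow_two]
    calc x7 * Ideal.Quotient.mk I0 p.divX * (x7 * Ideal.Quotient.mk I0 p.divX)
        = (x7 * x7) * (Ideal.Quotient.mk I0 p.divX * Ideal.Quotient.mk I0 p.divX) := by ring
      _ = 0 := by rw [hx2, zero_mul]
  rw [hdec, add_comm]
  exact hnil.isUnit_add_left_of_commute hunit (Commute.all _ _)

theorem Z8_example_not_TAF :
    ¬ IsTAFRing A7 ∧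
    ¬ Ideal.span {x7} ≤ M7 ^ 2 ∧ ¬ M7 ^ 2 ≤ Ideal.span {x7} := by
  have h2M : (2 : A7) ∈ M7 := Ideal.subset_span (by simp)
  have h4mem : (4 : A7) ∈ M7 ^ 2 := by
    rw [show M7 ^ 2 = M7 * M7 from sq M7, show (4 : A7) = 2 * 2 by norm_num]
    exact Ideal.mul_mem_mul h2M h2M
  have hxmem : x7 ∈ Ideal.span {x7} := Ideal.subset_span (by simp)
  refine ⟨?_, ?_, ?_⟩
  · intro hTAF
    obtain ⟨n, J, hJ, hprod⟩ := hTAF (Ideal.span {x7}) span_x_ne_top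
    match n, J, hJ, hprod with
    | 0, J, hJ, hprod =>
      rw [Fin.prod_univ_zero, Ideal.one_eq_top] at hprod
      exact span_x_ne_top hprod
    | 1, J, hJ, hprod =>
      rw [Fin.prod_univ_one] at hprod
      have h0 : (2 : A7) * 2 * 2 ∈ J 0 := by
        rw [show (2:A7) * 2 * 2 = (8:A7) by norm_num, h8]
        exact (J 0).zero_mem
      have h4 : (4 : A7) ∈ J 0 := by
        rcases (hJ 0).2 2 2 2 h0 with h | h | h <;>
          · rw [show (2:A7) * 2 = 4 by norm_num] at h; exact h
      rw [← hprod] at h4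
      exact four_not_mem h4
    | (n + 2), J, hJ, hprod =>
      have hJle : ∀ i, J i ≤ M7 := by
        intro i a ha
        by_contra hna
        exact (hJ i).1 (Ideal.eq_top_of_isUnit_mem _ ha (unit_of_not_mem hna))
      have hle : ∏ i, J i ≤ M7 ^ 2 := by
        rw [Fin.prod_univ_succ, Fin.prod_univ_succ]
        calc J 0 * (J (Fin.succ 0) * ∏ i : Fin n, J i.succ.succ)
            ≤ M7 * (M7 * ⊤) :=
              mul_le_mul' (hJle 0) (mul_le_mul' (hJle _) le_top)
          _ = M7 ^ 2 := by rw [Ideal.mul_top]; exact (sq M7).symm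
      rw [← hprod] at hle
      exact x_not_mem_M2 (hle hxmem)
  · intro hle
    exact x_not_mem_M2 (hle hxmem)
  · intro hle
    exact four_not_mem (hle h4mem)
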